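/- Let M be a real m-dimensional C^1 submanifold of C^n, and let p be a point of M. Regarding the differentials dz_1, ..., dz_n of the complex coordinate functions as complex-valued 1-forms on M at p, the complex dimension of the complex tangent space H_pM = T_pM ∩ i·T_pM equals m minus the complex dimension of the span of {dz_1(p), ..., dz_n(p)} in the complexified cotangent space of M at p. -/

import Mathlib

open Module Submodule

private lemma span_dz_rank {m n : ℕ} (J : Matrix (Fin n) (Fin m) ℂ)
    (dz : Fin n → Module.Dual ℂ (Fin m → ℂ))
    (hdz : ∀ j, dz j = (LinearMap.proj j).comp J.mulVecLin) :
    finrank ℂ (Submodule.span ℂ (Set.range dz)) = J.rank := by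
  let E := LinearEquiv.piRing ℂ ℂ (Fin m) ℂ
  have h1 : (E : Module.Dual ℂ (Fin m → ℂ) →ₗ[ℂ] (Fin m → ℂ)) ∘ dz = J := by
    funext j k
    simp [E, hdz, Matrix.mulVec_single]
  rw [← LinearEquiv.finrank_map_eq E, Submodule.map_span, ← Set.range_comp, h1,
    Matrix.rank_eq_finrank_span_row]
  rfl

private lemma H_rank {m n : ℕ}
    (A : (Fin m → ℝ) →ₗ[ℝ] (Fin n → ℂ)) (hA : Function.Injective A)
    (J : Matrix (Fin n) (Fin m) ℂ)
    (hJ : ∀ j k, J j k = A (Pi.single k 1) j)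
    (T : Submodule ℝ (Fin n → ℂ)) (hT : T = LinearMap.range A)
    (H : Submodule ℂ (Fin n → ℂ))
    (hH : (H : Set (Fin n → ℂ)) =
      (T : Set (Fin n → ℂ)) ∩
        ((T.map ((Complex.I • (LinearMap.id : (Fin n → ℂ) →ₗ[ℂ] (Fin n → ℂ))).restrictScalars ℝ)) :
          Set (Fin n → ℂ))) :
    Module.finrank ℂ H = m - J.rank := by
  classical
  set f := ((Complex.I • (LinearMap.id : (Fin n → ℂ) →ₗ[ℂ] (Fin n → ℂ))).restrictScalars ℝ)
  set L := J.mulVecLin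
  -- L extends A
  have hLA : ∀ v : Fin m → ℝ, L (fun k => (v k : ℂ)) = A v := by
    intro v
    have hv : (∑ k, v k • (Pi.single k 1 : Fin m → ℝ)) = v := by
      funext i
      simp [Finset.sum_apply, Pi.single_apply]
    conv_rhs => rw [← hv]
    rw [map_sum]
    funext j
    simp only [L, Matrix.mulVecLin_apply, Matrix.mulVec, dotProduct,
      Finset.sum_apply, Pi.smul_apply, hJ]
    congr 1
    funext k
    rw [map_smul, Pi.smul_apply, Complex.real_smul, mul_comm]
  -- T ⊔ iT = restrictScalars ℝ (range L)
  have hsup : T ⊔ T.map f = (LinearMap.range L).restrictScalars ℝ := by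
    apply le_antisymm
    · apply sup_le
      · rw [hT]
        rintro _ ⟨v, rfl⟩
        exact ⟨fun k => (v k : ℂ), hLA v⟩
      · rw [hT]
        rintro _ ⟨_, ⟨v, rfl⟩, rfl⟩
        refine ⟨Complex.I • fun k => (v k : ℂ), ?_⟩
        rw [map_smul, hLA]
        simp [f]
    · rintro _ ⟨w, rfl⟩
      have hw : w = (fun k => ((w k).re : ℂ)) + Complex.I • fun k => ((w k).im : ℂ) := by
        funext k
        simp [Complex.ext_iff]
      rw [hw, map_add, map_smul]
      refine add_mem_sup ?_ ?_
      · rw [hLA, hT]; exact ⟨_, rfl⟩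
      · refine Submodule.mem_map.2 ⟨L fun k => ((w k).im : ℂ), ?_, ?_⟩
        · rw [hLA, hT]; exact ⟨_, rfl⟩
        · simp [f]
  -- H restricted = T ⊓ iT
  have hinf : H.restrictScalars ℝ = T ⊓ T.map f := by
    apply SetLike.coe_injective
    simpa using hH
  have hrT : finrank ℝ T = m := by
    rw [hT, LinearMap.finrank_range_of_inj hA]
    simp
  have hrfT : finrank ℝ (T.map f) = m := by
    let e : (Fin n → ℂ) ≃ₗ[ℝ] (Fin n → ℂ) :=
      (LinearEquiv.smulOfUnit (Units.mk0 Complex.I Complex.I_ne_zero)).restrictScalars ℝ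
    have hfe : f = (e : (Fin n → ℂ) →ₗ[ℝ] (Fin n → ℂ)) := by
      ext w
      simp [f, e, LinearEquiv.smulOfUnit, DistribMulAction.toLinearEquiv, Units.smul_def]
    rw [hfe, LinearEquiv.finrank_map_eq e T, hrT]
  have key := Submodule.finrank_sup_add_finrank_inf_eq T (T.map f)
  rw [hsup, ← hinf, hrT, hrfT] at key
  have h2H : finrank ℝ (H.restrictScalars ℝ) = 2 * finrank ℂ H := by
    rw [((Submodule.restrictScalarsEquiv ℝ ℂ (Fin n → ℂ) H).restrictScalars ℝ).finrank_eq]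
    exact finrank_real_of_complex H
  have h2R : finrank ℝ ((LinearMap.range L).restrictScalars ℝ) = 2 * J.rank := by
    rw [((Submodule.restrictScalarsEquiv ℝ ℂ (Fin n → ℂ) (LinearMap.range L)).restrictScalars ℝ).finrank_eq]
    exact finrank_real_of_complex _
  rw [h2H, h2R] at key
  omega

/-- Let `M` be a real `m`-dimensional `C¹` submanifold of `ℂⁿ`
(presented locally near `p` as the image of a `C¹` embedding
`g : ℝᵐ ⊇ U → ℂⁿ` with injective differential, `p = g x`).  The tangent space
`T = T_p M` is the range of the differential `Dg x`, the complex tangent space is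
`H_p M = T ∩ i T`, and the differentials `dz_1, …, dz_n` at `p`, regarded as
complex-valued forms on the complexified tangent space `ℂᵐ` of `M` at `p`, are the
complex-linear extensions `v ↦ (J.mulVec v) j` of the components of `Dg x`
(where `J` is the complex Jacobian matrix).  Then
`dim_ℂ H_p M = m - dim_ℂ span{dz_1(p), …, dz_n(p)}`. -/
theorem stmt_0 {m n : ℕ} (U : Set (Fin m → ℝ)) (hU : IsOpen U)
    (x : Fin m → ℝ) (hx : x ∈ U)
    (g : (Fin m → ℝ) → (Fin n → ℂ))
    (Dg : (Fin m → ℝ) → ((Fin m → ℝ) →L[ℝ] (Fin n → ℂ)))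
    (hg : ∀ y ∈ U, HasFDerivAt g (Dg y) y)
    (hDg : ContinuousOn Dg U)
    (himm : ∀ y ∈ U, Function.Injective (Dg y))
    (hemb : Topology.IsEmbedding (U.restrict g))
    -- the tangent space `T_p M ⊆ ℂⁿ` at `p = g x`, as a real subspace
    (T : Submodule ℝ (Fin n → ℂ))
    (hT : T = LinearMap.range ((Dg x) : (Fin m → ℝ) →ₗ[ℝ] (Fin n → ℂ)))
    -- the complex tangent space `H_p M = T_p M ∩ i T_p M`, a complex subspace
    (H : Submodule ℂ (Fin n → ℂ))
    (hH : (H : Set (Fin n → ℂ)) =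
      (T : Set (Fin n → ℂ)) ∩
        ((T.map ((Complex.I • (LinearMap.id : (Fin n → ℂ) →ₗ[ℂ] (Fin n → ℂ))).restrictScalars ℝ)) :
          Set (Fin n → ℂ)))
    -- the complex Jacobian matrix of `g` at `x`
    (J : Matrix (Fin n) (Fin m) ℂ)
    (hJ : ∀ j k, J j k = Dg x (Pi.single k 1) j)
    -- the differentials `dz_j(p)` as elements of the complexified cotangent space of `M` at `p`
    (dz : Fin n → Module.Dual ℂ (Fin m → ℂ))
    (hdz : ∀ j, dz j = (LinearMap.proj j).comp J.mulVecLin) :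
    Module.finrank ℂ H =
      m - Module.finrank ℂ (Submodule.span ℂ (Set.range dz)) := by
  rw [span_dz_rank J dz hdz]
  exact H_rank ((Dg x) : (Fin m → ℝ) →ₗ[ℝ] (Fin n → ℂ)) (himm x hx) J hJ T hT H hH
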